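/- Let A be a commutative ring, let n ≥ 1, let a be a function assigning an element a_f ∈ A to each edge f of the complete graph K_{n+1}, and let e_0 be an edge of K_{n+1}. For every spanning tree T of K_n, one has T_*((c_{e_0})_* a) = Σ_{T'} ( T'_*(a + 1_{e_0}) − T'_*(a) ), where the sum ranges over the spanning trees T' of K_{n+1} that contain e_0 and whose contracted image under c_{e_0} equals T (there are 2^{ν_T(s_{e_0})} of them). -/

import Mathlib

/-- The product `T_*(a) = ∏_{f edge of T} a_f` associated to a (spanning sub)graph `T`
of the complete graph on `Fin n` and a function `a` on edges. -/
noncomputable def treeProd {n : ℕ} {A : Type*} [CommRing A]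
    (T : SimpleGraph (Fin n)) (a : Sym2 (Fin n) → A) : A :=
  ∏ᶠ f ∈ T.edgeSet, a f

/-- The `n`-th forested form `Φ_n(a) = Σ_{T spanning tree of K_n} T_*(a)`. -/
noncomputable def forestedForm (n : ℕ) {A : Type*} [CommRing A]
    (a : Sym2 (Fin n) → A) : A :=
  ∑ᶠ (T : SimpleGraph (Fin n)) (_ : T.IsTree), treeProd T a

/-- The pushforward `(c_{e₀})_* a`: the value on an edge `g` of `K_n` is the sum of `a_f`
over the edges `f ≠ e₀` of `K_{n+1}` contracting onto `g`. -/
noncomputable def pushforward {n : ℕ} {A : Type*} [CommRing A]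
    (q : Fin (n + 1) → Fin n) (e₀ : Sym2 (Fin (n + 1)))
    (a : Sym2 (Fin (n + 1)) → A) : Sym2 (Fin n) → A :=
  fun g => ∑ᶠ f ∈ {f : Sym2 (Fin (n + 1)) | ¬ f.IsDiag ∧ f ≠ e₀ ∧ Sym2.map q f = g}, a f

/-- The function `1_{e₀}`, equal to `1` on the edge `e₀` and `0` elsewhere. -/
def edgeIndicator {n : ℕ} {A : Type*} [CommRing A] (e₀ : Sym2 (Fin n)) :
    Sym2 (Fin n) → A :=
  fun f => if f = e₀ then 1 else 0


open SimpleGraph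

lemma aux_reachable_delete {V : Type*} {G : SimpleGraph V} {v w : V}
    (hr : (G \ fromEdgeSet {s(v,w)}).Reachable v w)
    {x y : V} (p : G.Walk x y) : (G \ fromEdgeSet {s(v,w)}).Reachable x y := by
  induction p with
  | nil => exact Reachable.refl _
  | @cons a b c h q ih =>
    refine Reachable.trans ?_ ih
    by_cases he : s(a, b) = s(v, w)
    · rw [Sym2.eq_iff] at he
      rcases he with ⟨rfl, rfl⟩ | ⟨rfl, rfl⟩
      · exact hr
      · exact hr.symm
    · exact Adj.reachable (by simp [he, h, h.ne])

lemma aux_card_le {V : Type*} [Fintype V] :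
    ∀ (m : ℕ) (G : SimpleGraph V) [Fintype G.edgeSet], G.edgeFinset.card = m →
      G.Connected → Fintype.card V ≤ G.edgeFinset.card + 1 := by
  classical
  intro m
  induction m using Nat.strong_induction_on with
  | _ m ih =>
    intro G _ hm hG
    by_cases hac : G.IsAcyclic
    · rw [(⟨hG, hac⟩ : G.IsTree).card_edgeFinset]
    · rw [isAcyclic_iff_forall_adj_isBridge] at hac
      push_neg at hac
      obtain ⟨v, w, hadj, hbr⟩ := hac
      rw [isBridge_iff] at hbr
      push_neg at hbr
      have hr := hbr
      set G' := G \ fromEdgeSet {s(v,w)} with hG'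
      have hGc' : G'.Connected := by
        rw [connected_iff] at hG ⊢
        refine ⟨fun x y => ?_, hG.2⟩
        obtain ⟨p⟩ := hG.1 x y
        exact aux_reachable_delete hr p
      have hes : G'.edgeSet = G.edgeSet \ {s(v,w)} := by
        have : G' = G.deleteEdges {s(v,w)} := rfl
        rw [this, deleteEdges]
        rw [edgeSet_sdiff, edgeSet_fromEdgeSet]
        ext e
        simp only [Set.mem_diff, Set.mem_singleton_iff, Set.mem_setOf_eq]
        constructor
        · rintro ⟨h1, h2⟩
          refine ⟨h1, fun h => h2 ⟨h, ?_⟩⟩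
          rintro hd
          subst h
          exact (G.not_isDiag_of_mem_edgeSet h1) hd
        · rintro ⟨h1, h2⟩
          exact ⟨h1, fun h => h2 h.1⟩
      haveI : Fintype G'.edgeSet := by rw [hes]; infer_instance
      have hcard : G'.edgeFinset.card = m - 1 := by
        rw [← hm]
        have : G'.edgeFinset = G.edgeFinset \ {s(v,w)} := by
          ext e; simp [edgeFinset, hes]
        rw [this, Finset.card_sdiff_of_subset (by simp [mem_edgeFinset, hadj])]
        simp
      have hm1 : 1 ≤ m := by
        rw [← hm]
        exact Finset.card_pos.mpr ⟨s(v,w), by simp [mem_edgeFinset, hadj]⟩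
      have hle := ih (m-1) (by omega) G' hcard hGc'
      omega

lemma aux_isTree_of_connected_card {V : Type*} [Fintype V] (G : SimpleGraph V)
    [Fintype G.edgeSet] (hG : G.Connected) (hc : G.edgeFinset.card + 1 = Fintype.card V) :
    G.IsTree := by
  classical
  by_cases hac : G.IsAcyclic
  · exact ⟨hG, hac⟩
  · exfalso
    rw [isAcyclic_iff_forall_adj_isBridge] at hac
    push_neg at hac
    obtain ⟨v, w, hadj, hbr⟩ := hac
    rw [isBridge_iff] at hbr
    push_neg at hbr
    have hr := hbr
    set G' := G \ fromEdgeSet {s(v,w)} with hG'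
    have hGc' : G'.Connected := by
      rw [connected_iff] at hG ⊢
      refine ⟨fun x y => ?_, hG.2⟩
      obtain ⟨p⟩ := hG.1 x y
      exact aux_reachable_delete hr p
    have hes : G'.edgeSet = G.edgeSet \ {s(v,w)} := by
      have : G' = G.deleteEdges {s(v,w)} := rfl
      rw [this, deleteEdges]
      rw [edgeSet_sdiff, edgeSet_fromEdgeSet]
      ext e
      simp only [Set.mem_diff, Set.mem_singleton_iff, Set.mem_setOf_eq]
      constructor
      · rintro ⟨h1, h2⟩
        refine ⟨h1, fun h => h2 ⟨h, ?_⟩⟩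
        rintro hd
        subst h
        exact (G.not_isDiag_of_mem_edgeSet h1) hd
      · rintro ⟨h1, h2⟩
        exact ⟨h1, fun h => h2 h.1⟩
    haveI : Fintype G'.edgeSet := by rw [hes]; infer_instance
    have hcard : G'.edgeFinset.card = G.edgeFinset.card - 1 := by
      have : G'.edgeFinset = G.edgeFinset \ {s(v,w)} := by
        ext e; simp [edgeFinset, hes]
      rw [this, Finset.card_sdiff_of_subset (by simp [mem_edgeFinset, hadj])]
      simp
    have hm1 : 1 ≤ G.edgeFinset.card :=
      Finset.card_pos.mpr ⟨s(v,w), by simp [mem_edgeFinset, hadj]⟩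
    have hle := aux_card_le _ G' rfl hGc'
    omega

lemma sym2_map_eq {α β : Type*} {q : α → β} {x y : β} {f : Sym2 α}
    (h : Sym2.map q f = s(x,y)) : ∃ c d, f = s(c,d) ∧ q c = x ∧ q d = y := by
  induction f with
  | _ c d =>
    rw [Sym2.map_pair_eq, Sym2.eq_iff] at h
    rcases h with ⟨h1,h2⟩|⟨h1,h2⟩
    · exact ⟨c,d, rfl, h1, h2⟩
    · exact ⟨d,c, Sym2.eq_swap, h2, h1⟩

section
variable {n : ℕ} {u v : Fin (n+1)} {q : Fin (n+1) → Fin n}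

lemma qeq (hinj : ∀ x y : Fin (n + 1), q x = q y → x = y ∨ s(x, y) = s(u, v))
    {w w' : Fin (n+1)} (h : q w = q w') : w = w' ∨ (w = u ∧ w' = v) ∨ (w = v ∧ w' = u) := by
  rcases hinj w w' h with h' | h'
  · exact Or.inl h'
  · rw [Sym2.eq_iff] at h'
    tauto

/-- reachability between two vertices in the same fiber, in any graph whose edge set
contains `s(u,v)`. -/
lemma same_fiber_reachable {G : SimpleGraph (Fin (n+1))} (hG : s(u,v) ∈ G.edgeSet)
    (hinj : ∀ x y : Fin (n + 1), q x = q y → x = y ∨ s(x, y) = s(u, v))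
    {w w' : Fin (n+1)} (h : q w = q w') : G.Reachable w w' := by
  rcases qeq hinj h with rfl | ⟨rfl, rfl⟩ | ⟨rfl, rfl⟩
  · exact Reachable.refl _
  · exact Adj.reachable hG
  · exact (Adj.reachable hG).symm
end

section
variable {n : ℕ} {u v : Fin (n+1)} {q : Fin (n+1) → Fin n}

lemma lift_isTree (huv : u ≠ v)
    (hinj : ∀ x y : Fin (n + 1), q x = q y → x = y ∨ s(x, y) = s(u, v))
    {T : SimpleGraph (Fin n)} (hT : T.IsTree) [Fintype T.edgeSet]
    (F : Finset (Sym2 (Fin (n+1))))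
    (hf1 : ∀ f ∈ F, ¬f.IsDiag ∧ f ≠ s(u,v))
    (hinjF : Set.InjOn (Sym2.map q) F)
    (himg : F.image (Sym2.map q) = T.edgeFinset) :
    letI G := fromEdgeSet (↑(insert s(u,v) F) : Set (Sym2 (Fin (n+1))))
    G.edgeSet = ↑(insert s(u,v) F) ∧ G.IsTree ∧ s(u, v) ∈ G.edgeSet ∧
      fromEdgeSet (Sym2.map q '' (G.edgeSet \ {s(u, v)})) = T := by
  classical
  set G := fromEdgeSet (↑(insert s(u,v) F) : Set (Sym2 (Fin (n+1)))) with hGdef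
  have huvd : ¬ (s(u,v) : Sym2 (Fin (n+1))).IsDiag := by simp [huv]
  have he₀F : s(u,v) ∉ F := fun h => (hf1 _ h).2 rfl
  have hES : G.edgeSet = ↑(insert s(u,v) F) := by
    rw [edgeSet_fromEdgeSet]
    ext f
    simp only [Set.mem_diff, Set.mem_setOf_eq, Finset.coe_insert, Set.mem_insert_iff,
      Finset.mem_coe, and_iff_left_iff_imp]
    rintro (rfl | hf) hd
    · exact huvd hd
    · exact (hf1 _ hf).1 hd
  refine ⟨hES, ?_, ?_, ?_⟩
  · -- tree
    have hcardF : F.card = T.edgeFinset.card := by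
      rw [← himg, Finset.card_image_of_injOn hinjF]
    have hTcard : T.edgeFinset.card + 1 = n := by
      rw [hT.card_edgeFinset, Fintype.card_fin]
    have he : s(u,v) ∈ G.edgeSet := by rw [hES]; simp
    have hconn : G.Connected := by
      have key : ∀ (x t : Fin n) (p : T.Walk x t) (w w' : Fin (n+1)), q w = x →
          q w' = t → G.Reachable w w' := by
        intro x t p
        induction p with
        | nil =>
          intro w w' hw hw'
          exact same_fiber_reachable he hinj (by rw [hw, hw'])
        | @cons x y _ h p ih =>
          intro w w' hw hw'
          have hg : s(x,y) ∈ T.edgeFinset := by rw [mem_edgeFinset]; exact h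
          rw [← himg, Finset.mem_image] at hg
          obtain ⟨f, hfF, hfmap⟩ := hg
          obtain ⟨c, d, rfl, hc, hd⟩ := sym2_map_eq hfmap
          have hadj : G.Adj c d := by
            rw [hGdef, fromEdgeSet_adj]
            refine ⟨by simp [hfF], ?_⟩
            intro h'
            subst h'
            exact (hf1 _ hfF).1 (by simp)
          have r1 : G.Reachable w c := same_fiber_reachable he hinj (by rw [hw, hc])
          have r2 : G.Reachable d w' := ih d w' hd hw'
          exact r1.trans (hadj.reachable.trans r2)
      rw [connected_iff]
      refine ⟨fun w w' => ?_, ⟨u⟩⟩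
      obtain ⟨p⟩ := hT.isConnected.preconnected (q w) (q w')
      exact key _ _ p w w' rfl rfl
    haveI : Fintype G.edgeSet := by rw [hES]; infer_instance
    refine aux_isTree_of_connected_card G hconn ?_
    have hEF : G.edgeFinset = insert s(u,v) F := by
      ext e
      simp [edgeFinset, hES]
    rw [hEF, Finset.card_insert_of_notMem he₀F, Fintype.card_fin]
    omega
  · rw [hES]; simp
  · -- contracted image
    have h1 : G.edgeSet \ {s(u,v)} = ↑F := by
      rw [hES]
      ext f
      simp only [Finset.coe_insert, Set.mem_diff, Set.mem_insert_iff,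
        Set.mem_singleton_iff, Finset.mem_coe]
      constructor
      · rintro ⟨rfl | hf, hne⟩
        · exact absurd rfl hne
        · exact hf
      · intro hf
        exact ⟨Or.inr hf, (hf1 _ hf).2⟩
    rw [h1]
    have : Sym2.map q '' ↑F = ↑(F.image (Sym2.map q)) := by
      simp [Finset.coe_image]
    rw [this, himg, coe_edgeFinset, fromEdgeSet_edgeSet]
end

noncomputable section
open scoped Classical

/-- The fiber of an edge under contraction, as a `Finset`. -/
noncomputable def Fib {n : ℕ} (q : Fin (n + 1) → Fin n) (e₀ : Sym2 (Fin (n + 1)))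
    (g : Sym2 (Fin n)) : Finset (Sym2 (Fin (n + 1))) :=
  (Set.toFinite {f : Sym2 (Fin (n + 1)) | ¬ f.IsDiag ∧ f ≠ e₀ ∧ Sym2.map q f = g}).toFinset

lemma mem_Fib {n : ℕ} {q : Fin (n + 1) → Fin n} {e₀ : Sym2 (Fin (n + 1))}
    {g : Sym2 (Fin n)} {f : Sym2 (Fin (n + 1))} :
    f ∈ Fib q e₀ g ↔ ¬ f.IsDiag ∧ f ≠ e₀ ∧ Sym2.map q f = g := by
  simp [Fib]

variable {n : ℕ} {A : Type*} [CommRing A]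

/-- The edge finset of the lift of a tree along a choice function `p`. -/
noncomputable def liftF {n : ℕ} (T : SimpleGraph (Fin n)) [Fintype T.edgeSet]
    (p : ∀ g ∈ T.edgeFinset, Sym2 (Fin (n + 1))) : Finset (Sym2 (Fin (n + 1))) :=
  T.edgeFinset.attach.image (fun x => p x.1 x.2)

/-- The lifted graph. -/
noncomputable def liftG {n : ℕ} (u v : Fin (n + 1)) (T : SimpleGraph (Fin n))
    [Fintype T.edgeSet] (p : ∀ g ∈ T.edgeFinset, Sym2 (Fin (n + 1))) :
    SimpleGraph (Fin (n + 1)) :=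
  SimpleGraph.fromEdgeSet ↑(insert s(u, v) (liftF T p))

section
open SimpleGraph
variable {u v : Fin (n+1)} {q : Fin (n+1) → Fin n}
variable {T : SimpleGraph (Fin n)} [Fintype T.edgeSet]
variable {p : ∀ g ∈ T.edgeFinset, Sym2 (Fin (n + 1))}

lemma pmap (hp : p ∈ T.edgeFinset.pi (Fib q s(u,v))) {g : Sym2 (Fin n)}
    (hg : g ∈ T.edgeFinset) : Sym2.map q (p g hg) = g :=
  (mem_Fib.mp (Finset.mem_pi.mp hp g hg)).2.2

lemma pInj (hp : p ∈ T.edgeFinset.pi (Fib q s(u,v)))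
    {x y : {g // g ∈ T.edgeFinset}} (h : p x.1 x.2 = p y.1 y.2) : x = y := by
  have hx := pmap hp x.2
  rw [h, pmap hp y.2] at hx
  exact Subtype.ext hx.symm

lemma liftF_spec (hp : p ∈ T.edgeFinset.pi (Fib q s(u,v))) :
    (∀ f ∈ liftF T p, ¬f.IsDiag ∧ f ≠ s(u,v)) ∧
      Set.InjOn (Sym2.map q) ↑(liftF T p) ∧
      (liftF T p).image (Sym2.map q) = T.edgeFinset := by
  have hp' := Finset.mem_pi.mp hp
  refine ⟨?_, ?_, ?_⟩
  · intro f hf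
    obtain ⟨x, -, rfl⟩ := Finset.mem_image.mp hf
    have := mem_Fib.mp (hp' x.1 x.2)
    exact ⟨this.1, this.2.1⟩
  · intro f1 h1 f2 h2 hmap
    obtain ⟨x, -, rfl⟩ := Finset.mem_image.mp h1
    obtain ⟨y, -, rfl⟩ := Finset.mem_image.mp h2
    have hxy : x = y :=
      Subtype.ext (by rw [← pmap hp x.2, hmap, pmap hp y.2])
    cases hxy
    rfl
  · rw [liftF, Finset.image_image]
    have : (Sym2.map q ∘ fun x : {g // g ∈ T.edgeFinset} => p x.1 x.2) = fun x => x.1 := by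
      funext x
      exact pmap hp x.2
    rw [this]
    exact Finset.attach_image_val

end
end

open SimpleGraph in
/-- for every spanning tree `T` of `K_n`,
`T_*((c_{e₀})_* a) = Σ_{T'} ( T'_*(a + 1_{e₀}) − T'_*(a) )`, the sum ranging over the
spanning trees `T'` of `K_{n+1}` containing `e₀ = s(u,v)` whose contracted image is `T`. -/
theorem treeProd_pushforward_eq_sum_over_preimages {A : Type*} [CommRing A]
    (n : ℕ) (hn : 1 ≤ n)
    (u v : Fin (n + 1)) (huv : u ≠ v)
    (q : Fin (n + 1) → Fin n) (hq : Function.Surjective q) (hquv : q u = q v)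
    (hinj : ∀ x y : Fin (n + 1), q x = q y → x = y ∨ s(x, y) = s(u, v))
    (a : Sym2 (Fin (n + 1)) → A)
    (T : SimpleGraph (Fin n)) (hT : T.IsTree) :
    treeProd T (pushforward q s(u, v) a) =
      ∑ᶠ T' ∈ {T' : SimpleGraph (Fin (n + 1)) |
          T'.IsTree ∧ s(u, v) ∈ T'.edgeSet ∧
          SimpleGraph.fromEdgeSet (Sym2.map q '' (T'.edgeSet \ {s(u, v)})) = T},
        (treeProd T' (a + edgeIndicator s(u, v)) - treeProd T' a) := by
  classical
  haveI : Fintype T.edgeSet := (Set.toFinite _).fintype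
  set e₀ : Sym2 (Fin (n+1)) := s(u,v) with he₀
  set S := {T' : SimpleGraph (Fin (n + 1)) |
          T'.IsTree ∧ s(u, v) ∈ T'.edgeSet ∧
          SimpleGraph.fromEdgeSet (Sym2.map q '' (T'.edgeSet \ {s(u, v)})) = T} with hS
  have hSfin : S.Finite := Set.toFinite _
  -- LHS as a finset product of finset sums
  have hL : treeProd T (pushforward q e₀ a) =
      ∑ p ∈ T.edgeFinset.pi (fun g => Fib q e₀ g), ∏ x ∈ T.edgeFinset.attach, a (p x.1 x.2) := by
    rw [treeProd, ← coe_edgeFinset, finprod_mem_coe_finset]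
    have h1 : ∀ g ∈ T.edgeFinset, pushforward q e₀ a g = ∑ f ∈ Fib q e₀ g, a f := by
      intro g _
      have hset : (↑(Fib q e₀ g) : Set (Sym2 (Fin (n+1)))) =
          {f | ¬f.IsDiag ∧ f ≠ e₀ ∧ Sym2.map q f = g} := Set.Finite.coe_toFinset _
      rw [pushforward, ← hset, finsum_mem_coe_finset]
    rw [Finset.prod_congr rfl h1, Finset.prod_sum]
  -- RHS over the finite set of trees
  have hR : ∑ᶠ T' ∈ S, (treeProd T' (a + edgeIndicator e₀) - treeProd T' a) =
      ∑ T' ∈ hSfin.toFinset, (treeProd T' (a + edgeIndicator e₀) - treeProd T' a) := by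
    rw [← finsum_mem_coe_finset, Set.Finite.coe_toFinset]
  rw [hL, hR]
  refine Finset.sum_bij (fun p _ => liftG u v T p) ?_ ?_ ?_ ?_
  · -- maps into S
    intro p hp
    obtain ⟨hf1, hinjF, himg⟩ := liftF_spec hp
    obtain ⟨hES, htree, hmem, hcontr⟩ := lift_isTree huv hinj hT (liftF T p) hf1 hinjF himg
    rw [Set.Finite.mem_toFinset]
    exact ⟨htree, hmem, hcontr⟩
  · -- injective
    intro p hp p' hp' heq
    obtain ⟨hf1, hinjF, himg⟩ := liftF_spec hp
    obtain ⟨hES, -, -, -⟩ := lift_isTree huv hinj hT (liftF T p) hf1 hinjF himg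
    obtain ⟨hf1', hinjF', himg'⟩ := liftF_spec hp'
    obtain ⟨hES', -, -, -⟩ := lift_isTree huv hinj hT (liftF T p') hf1' hinjF' himg'
    have hsets : (insert e₀ (liftF T p)) = (insert e₀ (liftF T p')) := by
      have heq' : fromEdgeSet (↑(insert s(u,v) (liftF T p)) : Set (Sym2 (Fin (n+1)))) =
          fromEdgeSet ↑(insert s(u,v) (liftF T p')) := heq
      have h2 := congrArg SimpleGraph.edgeSet heq'
      rw [hES, hES'] at h2
      exact_mod_cast h2
    funext g hg
    have h1 : p g hg ∈ insert e₀ (liftF T p) :=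
      Finset.mem_insert_of_mem (Finset.mem_image.mpr ⟨⟨g, hg⟩, Finset.mem_attach _ _, rfl⟩)
    rw [hsets, Finset.mem_insert] at h1
    rcases h1 with h1 | h1
    · exact absurd h1 (mem_Fib.mp (Finset.mem_pi.mp hp g hg)).2.1
    · obtain ⟨y, -, hy⟩ := Finset.mem_image.mp h1
      have hyg : y.1 = g := by rw [← pmap hp' y.2, hy, pmap hp hg]
      rcases y with ⟨y1, y2⟩
      cases hyg
      rw [← hy]
  · -- surjective
    intro T' hT'mem
    rw [Set.Finite.mem_toFinset] at hT'mem
    obtain ⟨hT'tree, hT'e₀, hT'contr⟩ := hT'mem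
    haveI : Fintype T'.edgeSet := (Set.toFinite _).fintype
    have hnd : ∀ f ∈ T'.edgeSet \ {e₀}, ¬ (Sym2.map q f).IsDiag := by
      intro f hf
      obtain ⟨hf1, hf2⟩ := hf
      revert hf1 hf2
      induction f with
      | _ c d =>
        intro hf1 hf2 hd
        rw [Sym2.map_pair_eq, Sym2.mk_isDiag_iff] at hd
        rcases hinj c d hd with rfl | h
        · exact (T'.not_isDiag_of_mem_edgeSet hf1) (by simp)
        · exact hf2 h
    have himgset : Sym2.map q '' (T'.edgeSet \ {e₀}) = T.edgeSet := by
      have hE := congrArg SimpleGraph.edgeSet hT'contr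
      rw [edgeSet_fromEdgeSet] at hE
      rw [← hE]
      ext g
      simp only [Set.mem_diff, Set.mem_setOf_eq]
      refine ⟨fun hg => ⟨hg, ?_⟩, And.left⟩
      obtain ⟨f, hf, rfl⟩ := hg
      exact hnd f hf
    set D := T'.edgeFinset.erase e₀ with hD
    have hDcoe : (↑D : Set (Sym2 (Fin (n+1)))) = T'.edgeSet \ {e₀} := by
      rw [hD, Finset.coe_erase, coe_edgeFinset]
    have himgD : D.image (Sym2.map q) = T.edgeFinset := by
      apply Finset.coe_injective
      rw [Finset.coe_image, hDcoe, himgset, coe_edgeFinset]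
    have he₀mem : e₀ ∈ T'.edgeFinset := mem_edgeFinset.mpr hT'e₀
    have hT'card : T'.edgeFinset.card = n := by
      have := hT'tree.card_edgeFinset
      rw [Fintype.card_fin] at this
      omega
    have hDcard : D.card = n - 1 := by
      rw [hD, Finset.card_erase_of_mem he₀mem, hT'card]
    have hTcard : T.edgeFinset.card = n - 1 := by
      have := hT.card_edgeFinset
      rw [Fintype.card_fin] at this
      omega
    have hex : ∀ g ∈ T.edgeFinset, ∃ f ∈ D, Sym2.map q f = g := by
      intro g hg
      rw [← himgD] at hg
      exact Finset.mem_image.mp hg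
    have hPpi : (fun g hg => (hex g hg).choose) ∈ T.edgeFinset.pi (fun g => Fib q e₀ g) := by
      rw [Finset.mem_pi]
      intro g hg
      obtain ⟨h1, h2⟩ := (hex g hg).choose_spec
      rw [mem_Fib]
      have hmem' : (hex g hg).choose ∈ T'.edgeSet :=
        mem_edgeFinset.mp (Finset.mem_of_mem_erase h1)
      exact ⟨T'.not_isDiag_of_mem_edgeSet hmem', Finset.ne_of_mem_erase h1, h2⟩
    refine ⟨fun g hg => (hex g hg).choose, hPpi, ?_⟩
    have hliftD : liftF T (fun g hg => (hex g hg).choose) ⊆ D := by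
      intro f hf
      obtain ⟨x, -, rfl⟩ := Finset.mem_image.mp hf
      exact ((hex x.1 x.2).choose_spec).1
    have he₀notmem : e₀ ∉ liftF T (fun g hg => (hex g hg).choose) := by
      intro h
      exact Finset.ne_of_mem_erase (hliftD h) rfl
    have hchooseInj : Function.Injective
        (fun x : {g // g ∈ T.edgeFinset} => (hex x.1 x.2).choose) := by
      intro x y h
      have h' : (hex x.1 x.2).choose = (hex y.1 y.2).choose := h
      exact Subtype.ext
        (by rw [← ((hex x.1 x.2).choose_spec).2, h', ((hex y.1 y.2).choose_spec).2])
    have hliftcard : (liftF T (fun g hg => (hex g hg).choose)).card = n - 1 := by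
      rw [liftF, Finset.card_image_of_injective _ hchooseInj, Finset.card_attach, hTcard]
    have hsub : insert e₀ (liftF T (fun g hg => (hex g hg).choose)) ⊆ T'.edgeFinset := by
      intro f hf
      rcases Finset.mem_insert.mp hf with rfl | hf
      · exact he₀mem
      · exact Finset.mem_of_mem_erase (hliftD hf)
    have hEq : insert e₀ (liftF T (fun g hg => (hex g hg).choose)) = T'.edgeFinset := by
      refine Finset.eq_of_subset_of_card_le hsub ?_
      rw [Finset.card_insert_of_notMem he₀notmem, hliftcard, hT'card]
      omega
    show liftG u v T (fun g hg => (hex g hg).choose) = T'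
    rw [liftG, hEq, coe_edgeFinset, fromEdgeSet_edgeSet]
  · -- values
    intro p hp
    obtain ⟨hf1, hinjF, himg⟩ := liftF_spec hp
    obtain ⟨hES, htree, hmem, hcontr⟩ := lift_isTree huv hinj hT (liftF T p) hf1 hinjF himg
    have he₀notmem : e₀ ∉ liftF T p := fun h => (hf1 _ h).2 rfl
    have hprod : ∀ (b : Sym2 (Fin (n+1)) → A), treeProd (liftG u v T p) b =
        b e₀ * ∏ x ∈ T.edgeFinset.attach, b (p x.1 x.2) := by
      intro b
      rw [treeProd]
      have : (liftG u v T p).edgeSet = ↑(insert e₀ (liftF T p)) := hES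
      rw [this, finprod_mem_coe_finset, Finset.prod_insert he₀notmem, liftF,
        Finset.prod_image (fun x _ y _ h => pInj hp h)]
    rw [hprod, hprod]
    have hfact : ∀ x ∈ T.edgeFinset.attach,
        ((a + edgeIndicator e₀ : Sym2 (Fin (n+1)) → A)) (p x.1 x.2) = a (p x.1 x.2) := by
      intro x _
      have : p x.1 x.2 ≠ e₀ := (mem_Fib.mp (Finset.mem_pi.mp hp x.1 x.2)).2.1
      simp [edgeIndicator, this]
    rw [Finset.prod_congr rfl hfact]
    have : ((a + edgeIndicator e₀ : Sym2 (Fin (n+1)) → A)) e₀ = a e₀ + 1 := by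
      simp [edgeIndicator]
    rw [this]
    ring
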